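/- Let H be a separable infinite-dimensional complex Hilbert space and let {f_n}_{n=0}^∞ be a sequence in H. Then {f_n} is an SCFC sequence (i.e., there exists a surjective bounded linear operator B on H such that {B f_n} is a Parseval frame for H) if and only if there exist an infinite-dimensional closed linear subspace D ⊆ H and a constant A > 0 such that A‖f‖² ≤ ∑_{n=0}^∞ |⟨f, f_n⟩|² < ∞ for every f ∈ D. -/

import Mathlib

open scoped ComplexInnerProductSpace

open scoped ENNReal
open ContinuousLinearMap

lemma rpow_toReal_two (x : ℝ) : x ^ (2 : ℝ≥0∞).toReal = x ^ 2 := by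
  rw [ENNReal.toReal_ofNat, show (2:ℝ) = ((2:ℕ):ℝ) by norm_num, Real.rpow_natCast]

lemma orthonormal_countable {E : Type*} [NormedAddCommGroup E] [InnerProductSpace ℂ E]
    [TopologicalSpace.SeparableSpace E] {w : Set E}
    (hw : Orthonormal ℂ ((↑) : w → E)) : w.Countable := by
  have hdist : ∀ x ∈ w, ∀ y ∈ w, x ≠ y → (1 : ℝ) ≤ dist x y := by
    intro x hx y hy hxy
    have h1 : ‖x‖ = 1 := hw.1 ⟨x, hx⟩
    have h2 : ‖y‖ = 1 := hw.1 ⟨y, hy⟩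
    have h0 : ⟪x, y⟫ = 0 := hw.2 (i := ⟨x, hx⟩) (j := ⟨y, hy⟩) (by simp [Subtype.ext_iff, hxy])
    have hsq : ‖x - y‖ ^ 2 = 2 := by
      rw [@norm_sub_sq ℂ]; simp [h0, h1, h2]; norm_num
    rw [dist_eq_norm]
    nlinarith [norm_nonneg (x - y)]
  have hpd : Set.PairwiseDisjoint w (fun x => Metric.ball x (1/2 : ℝ)) := by
    intro x hx y hy hxy
    exact Metric.ball_disjoint_ball (by linarith [hdist x hx y hy hxy])
  exact hpd.countable_of_isOpen (fun i _ => Metric.isOpen_ball)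
    (fun i _ => Metric.nonempty_ball.2 (by norm_num))

lemma exists_hb_nat (E : Type*) [NormedAddCommGroup E] [InnerProductSpace ℂ E]
    [CompleteSpace E] [TopologicalSpace.SeparableSpace E]
    (hE : ¬ FiniteDimensional ℂ E) : Nonempty (HilbertBasis ℕ ℂ E) := by
  obtain ⟨w, b, hb⟩ := exists_hilbertBasis ℂ E
  have horth : Orthonormal ℂ ((↑) : w → E) := hb ▸ b.orthonormal
  have hcount : w.Countable := orthonormal_countable horth
  have hinf : w.Infinite := by
    intro hfin
    apply hE
    have hfd : FiniteDimensional ℂ (Submodule.span ℂ w) :=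
      FiniteDimensional.span_of_finite ℂ hfin
    have hclosed : IsClosed ((Submodule.span ℂ w : Submodule ℂ E) : Set E) :=
      Submodule.closed_of_finiteDimensional _
    have hspan : (Submodule.span ℂ w) = ⊤ := by
      have hd := b.dense_span
      rw [hb, Subtype.range_coe] at hd
      rw [← hclosed.submodule_topologicalClosure_eq, hd]
    rw [hspan] at hfd
    exact Submodule.topEquiv.finiteDimensional
  haveI := hcount.to_subtype
  haveI : Infinite w := hinf.to_subtype
  obtain ⟨d⟩ := nonempty_denumerable w
  let e : w ≃ ℕ := d.eqv
  have horth2 : Orthonormal ℂ (((↑) : w → E) ∘ e.symm) := horth.comp _ e.symm.injective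
  refine ⟨HilbertBasis.mk horth2 ?_⟩
  have hr : Set.range (((↑) : w → E) ∘ e.symm) = w := by
    rw [Set.range_comp, e.symm.surjective.range_eq, Set.image_univ, Subtype.range_coe]
  rw [hr]
  have hd := b.dense_span
  rw [hb, Subtype.range_coe] at hd
  rw [hd]

lemma exists_analysis_op {H : Type*} [NormedAddCommGroup H] [InnerProductSpace ℂ H]
    (fseq : ℕ → H) (D : Submodule ℂ H) [CompleteSpace D]
    (hsum : ∀ f : D, Summable (fun n => ‖⟪(f : H), fseq n⟫‖ ^ 2)) :
    ∃ T : D →L[ℂ] lp (fun _ : ℕ => ℂ) 2,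
      ∀ (f : D) (n : ℕ), (T f : ∀ _ : ℕ, ℂ) n = ⟪fseq n, (f : H)⟫ := by
  have hmem : ∀ f : D, Memℓp (fun n => (⟪fseq n, (f : H)⟫ : ℂ)) 2 := by
    intro f
    apply memℓp_gen
    simp only [rpow_toReal_two]
    simpa [norm_inner_symm] using hsum f
  let T₀ : D →ₗ[ℂ] lp (fun _ : ℕ => ℂ) 2 :=
    { toFun := fun f => ⟨fun n => ⟪fseq n, (f : H)⟫, hmem f⟩
      map_add' := fun f g => by
        apply lp.ext; funext n
        simp [lp.coeFn_add, inner_add_right]; rfl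
      map_smul' := fun c f => by
        apply lp.ext; funext n
        simp [lp.coeFn_smul, inner_smul_right] }
  have hcoord : ∀ (f : D) (n : ℕ), (T₀ f : ∀ _ : ℕ, ℂ) n = ⟪fseq n, (f : H)⟫ :=
    fun f n => rfl
  have hcont : Continuous T₀ := by
    apply T₀.continuous_of_seq_closed_graph
    intro u x y hux huy
    apply lp.ext; funext n
    have h1 : Filter.Tendsto (fun k => (T₀ (u k) : ∀ _ : ℕ, ℂ) n)
        Filter.atTop (nhds ((y : ∀ _ : ℕ, ℂ) n)) := by
      rw [tendsto_iff_dist_tendsto_zero]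
      have hk : ∀ k, dist ((T₀ (u k) : ∀ _ : ℕ, ℂ) n) ((y : ∀ _ : ℕ, ℂ) n)
          ≤ dist (T₀ (u k)) y := by
        intro k
        rw [dist_eq_norm, dist_eq_norm]
        have := lp.norm_apply_le_norm (E := fun _ : ℕ => ℂ) two_ne_zero
          (T₀ (u k) - y) n
        simpa [lp.coeFn_sub] using this
      exact squeeze_zero (fun k => dist_nonneg) hk (tendsto_iff_dist_tendsto_zero.mp huy)
    have h2 : Filter.Tendsto (fun k => (⟪fseq n, ((u k : D) : H)⟫ : ℂ))
        Filter.atTop (nhds (⟪fseq n, (x : H)⟫ : ℂ)) :=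
      Filter.Tendsto.inner tendsto_const_nhds
        ((continuous_subtype_val.tendsto _).comp hux)
    exact tendsto_nhds_unique h1 h2
  exact ⟨⟨T₀, hcont⟩, hcoord⟩

theorem stmt3' {H : Type*} [NormedAddCommGroup H] [InnerProductSpace ℂ H]
    [CompleteSpace H] [TopologicalSpace.SeparableSpace H]
    (hH : ¬ FiniteDimensional ℂ H) (fseq : ℕ → H) :
    (∃ D : Submodule ℂ H, IsClosed (D : Set H) ∧ ¬ FiniteDimensional ℂ D ∧
        ∃ A : ℝ, 0 < A ∧ ∀ f ∈ D,
          Summable (fun n => ‖⟪f, fseq n⟫‖ ^ 2) ∧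
          A * ‖f‖ ^ 2 ≤ ∑' n, ‖⟪f, fseq n⟫‖ ^ 2) →
    (∃ B : H →L[ℂ] H, Function.Surjective B ∧
        ∀ f : H, HasSum (fun n => ‖⟪f, B (fseq n)⟫‖ ^ 2) (‖f‖ ^ 2)) := by
  rintro ⟨D, hDc, hDfin, A, hApos, hAf⟩
  haveI : CompleteSpace D := hDc.completeSpace_coe
  have hsum : ∀ f : D, Summable (fun n => ‖⟪(f : H), fseq n⟫‖ ^ 2) :=
    fun f => (hAf f f.2).1
  obtain ⟨T, hT⟩ := exists_analysis_op fseq D hsum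
  have htwo : (0:ℝ) < (2 : ℝ≥0∞).toReal := by rw [ENNReal.toReal_ofNat]; norm_num
  -- norm formula for T
  have hTnorm : ∀ f : D, ‖T f‖ ^ 2 = ∑' n, ‖⟪(f : H), fseq n⟫‖ ^ 2 := by
    intro f
    have h := lp.norm_rpow_eq_tsum htwo (T f)
    simp only [rpow_toReal_two] at h
    rw [h]
    exact tsum_congr fun n => by rw [hT f n, norm_inner_symm]
  -- lower bound
  have hTlow : ∀ f : D, Real.sqrt A * ‖f‖ ≤ ‖T f‖ := by
    intro f
    have hle : A * ‖f‖ ^ 2 ≤ ‖T f‖ ^ 2 := by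
      rw [hTnorm f]
      exact (hAf f f.2).2
    have h1 : (Real.sqrt A * ‖f‖) ^ 2 ≤ ‖T f‖ ^ 2 := by
      rw [mul_pow, Real.sq_sqrt hApos.le]
      exact hle
    have h2 := Real.sqrt_le_sqrt h1
    rwa [Real.sqrt_sq (by positivity), Real.sqrt_sq (norm_nonneg _)] at h2
  -- antilipschitz
  have hsA : (0:ℝ) < Real.sqrt A := Real.sqrt_pos.2 hApos
  have hanti : AntilipschitzWith ⟨(Real.sqrt A)⁻¹, by positivity⟩ T := by
    apply T.antilipschitz_of_bound
    intro x
    have := hTlow x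
    show ‖x‖ ≤ (Real.sqrt A)⁻¹ * ‖T x‖
    rw [inv_mul_eq_div, le_div_iff₀ hsA]
    linarith [hTlow x]
  -- range of T
  set R : Submodule ℂ (lp (fun _ : ℕ => ℂ) 2) := LinearMap.range (T : D →ₗ[ℂ] lp (fun _ : ℕ => ℂ) 2) with hR
  have hRclosed : IsClosed (R : Set (lp (fun _ : ℕ => ℂ) 2)) := by
    have h2 : (R : Set (lp (fun _ : ℕ => ℂ) 2)) = Set.range ⇑T := by
      ext z
      constructor
      · rintro ⟨y, rfl⟩; exact ⟨y, rfl⟩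
      · rintro ⟨y, rfl⟩; exact ⟨y, rfl⟩
    rw [h2]
    exact hanti.isClosed_range T.uniformContinuous
  haveI : CompleteSpace R := hRclosed.completeSpace_coe
  have hmemR : ∀ x : D, T x ∈ R := fun x => ⟨x, rfl⟩
  let Tr : D →L[ℂ] R := T.codRestrict R hmemR
  have hker : LinearMap.ker (Tr : D →ₗ[ℂ] R) = ⊥ := by
    rw [ker_codRestrict]
    exact LinearMap.ker_eq_bot.mpr hanti.injective
  have hrange : LinearMap.range (Tr : D →ₗ[ℂ] R) = ⊤ := by
    rw [LinearMap.range_eq_top]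
    rintro ⟨y, x, hx⟩
    exact ⟨x, Subtype.ext (by simpa [Tr, coe_codRestrict_apply] using hx)⟩
  let e : D ≃L[ℂ] R := ContinuousLinearEquiv.ofBijective Tr hker hrange
  -- separability and infinite-dimensionality of R
  haveI : SecondCountableTopology H := UniformSpace.secondCountable_of_separable H
  haveI : SecondCountableTopology D := inferInstance
  haveI : TopologicalSpace.SeparableSpace R :=
    e.surjective.denseRange.separableSpace e.continuous
  have hRfin : ¬ FiniteDimensional ℂ R := by
    intro h
    apply hDfin
    haveI := h
    exact e.symm.toLinearEquiv.finiteDimensional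
  obtain ⟨bH⟩ := exists_hb_nat H hH
  obtain ⟨bR⟩ := exists_hb_nat R hRfin
  let W : H ≃ₗᵢ[ℂ] R := bH.repr.trans bR.repr.symm
  let Wc : H ≃L[ℂ] R := W.toContinuousLinearEquiv
  let C₀ : H ≃L[ℂ] D := Wc.trans e.symm
  let C : H →L[ℂ] H := D.subtypeL ∘L (C₀ : H →L[ℂ] D)
  let M : H →L[ℂ] H := (C₀.symm : D →L[ℂ] H) ∘L (D.orthogonalProjectionOnto)
  have hMC : M ∘L C = ContinuousLinearMap.id ℂ H := by
    ext g
    show C₀.symm (D.orthogonalProjectionOnto (D.subtypeL (C₀ g))) = g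
    rw [Submodule.subtypeL_apply, Submodule.orthogonalProjectionOnto_mem_subspace_eq_self,
      ContinuousLinearEquiv.symm_apply_apply]
  refine ⟨ContinuousLinearMap.adjoint C, ?_, ?_⟩
  · intro x
    refine ⟨ContinuousLinearMap.adjoint M x, ?_⟩
    have : ContinuousLinearMap.adjoint C ∘L ContinuousLinearMap.adjoint M
        = ContinuousLinearMap.id ℂ H := by
      rw [← ContinuousLinearMap.adjoint_comp, hMC, ContinuousLinearMap.adjoint_id]
    calc ContinuousLinearMap.adjoint C (ContinuousLinearMap.adjoint M x)
        = (ContinuousLinearMap.adjoint C ∘L ContinuousLinearMap.adjoint M) x := rfl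
      _ = x := by rw [this]; rfl
  · intro g
    have key : ∀ n, (⟪g, ContinuousLinearMap.adjoint C (fseq n)⟫ : ℂ)
        = ⟪C g, fseq n⟫ := fun n => ContinuousLinearMap.adjoint_inner_right C g (fseq n)
    have hTrC : T (C₀ g) = ((Wc g : R) : lp (fun _ : ℕ => ℂ) 2) := by
      have h1 : Tr (C₀ g) = Wc g := by
        show Tr (e.symm (Wc g)) = Wc g
        have h2 : ∀ d : D, Tr d = e d := fun d => rfl
        rw [h2, e.apply_symm_apply]
      rw [← coe_codRestrict_apply T R hmemR (C₀ g)]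
      exact congrArg _ h1
    have hx := lp.hasSum_norm htwo ((Wc g : R) : lp (fun _ : ℕ => ℂ) 2)
    simp only [rpow_toReal_two] at hx
    have hnorm : ‖((Wc g : R) : lp (fun _ : ℕ => ℂ) 2)‖ = ‖g‖ := by
      rw [show ‖((Wc g : R) : lp (fun _ : ℕ => ℂ) 2)‖ = ‖Wc g‖ from rfl]
      rw [show (Wc g : R) = W g from rfl]
      exact W.norm_map g
    rw [hnorm] at hx
    have hterm : (fun n => ‖(⟪g, ContinuousLinearMap.adjoint C (fseq n)⟫ : ℂ)‖ ^ 2)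
        = fun n => ‖((Wc g : R) : lp (fun _ : ℕ => ℂ) 2) n‖ ^ 2 := by
      funext n
      rw [key n]
      rw [show C g = ((C₀ g : D) : H) from rfl]
      rw [norm_inner_symm, ← hT (C₀ g) n, hTrC]
    rw [hterm]
    exact hx


/-- `{f_n}` is an SCFC sequence (some surjective bounded operator `B` maps it to
a Parseval frame of `H`) iff there exist an infinite-dimensional closed subspace `D ⊆ H` and
`A > 0` with `A‖f‖² ≤ ∑ |⟨f, f_n⟩|² < ∞` for all `f ∈ D`. -/
theorem stmt3 {H : Type*} [NormedAddCommGroup H] [InnerProductSpace ℂ H]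
    [CompleteSpace H] [TopologicalSpace.SeparableSpace H]
    (hH : ¬ FiniteDimensional ℂ H) (fseq : ℕ → H) :
    (∃ B : H →L[ℂ] H, Function.Surjective B ∧
        ∀ f : H, HasSum (fun n => ‖⟪f, B (fseq n)⟫‖ ^ 2) (‖f‖ ^ 2)) ↔
      ∃ D : Submodule ℂ H, IsClosed (D : Set H) ∧ ¬ FiniteDimensional ℂ D ∧
        ∃ A : ℝ, 0 < A ∧ ∀ f ∈ D,
          Summable (fun n => ‖⟪f, fseq n⟫‖ ^ 2) ∧
          A * ‖f‖ ^ 2 ≤ ∑' n, ‖⟪f, fseq n⟫‖ ^ 2 := by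
  constructor
  · rintro ⟨B, hBsurj, hB⟩
    set Bd := ContinuousLinearMap.adjoint B with hBd
    obtain ⟨c, hc0, hc⟩ := B.exists_preimage_norm_le hBsurj
    -- Bd is bounded below
    have hlow : ∀ f : H, ‖f‖ ≤ c * ‖Bd f‖ := by
      intro f
      obtain ⟨x, hx, hxn⟩ := hc f
      have h1 : (‖f‖ : ℝ) ^ 2 = Complex.re ⟪f, f⟫ := by
        rw [← inner_self_eq_norm_sq (𝕜 := ℂ)]; rfl
      have h2 : ⟪f, f⟫ = ⟪Bd f, x⟫ := by
        rw [hBd, ContinuousLinearMap.adjoint_inner_left, hx]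
      have h3 : Complex.re ⟪Bd f, x⟫ ≤ ‖Bd f‖ * ‖x‖ := by
        calc Complex.re ⟪Bd f, x⟫ ≤ ‖⟪Bd f, x⟫‖ := Complex.re_le_norm _
          _ ≤ ‖Bd f‖ * ‖x‖ := norm_inner_le_norm _ _
      have h4 : ‖f‖ ^ 2 ≤ ‖Bd f‖ * (c * ‖f‖) := by
        rw [h1, h2]
        exact h3.trans (by
          have := mul_le_mul_of_nonneg_left hxn (norm_nonneg (Bd f))
          linarith)
      rcases eq_or_lt_of_le (norm_nonneg f) with h | h
      · rw [← h]; positivity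
      · nlinarith
    have hanti : AntilipschitzWith ⟨c, hc0.le⟩ Bd :=
      Bd.antilipschitz_of_bound (fun x => hlow x)
    refine ⟨LinearMap.range (Bd : H →ₗ[ℂ] H), ?_, ?_, (1 + ‖Bd‖)⁻¹ ^ 2, by positivity, ?_⟩
    · have := hanti.isClosed_range Bd.uniformContinuous
      simpa [LinearMap.coe_range] using this
    · intro hfin
      apply hH
      haveI := hfin
      have e := (LinearEquiv.ofInjective (Bd : H →ₗ[ℂ] H)
        (by exact_mod_cast hanti.injective)).symm
      exact e.finiteDimensional
    · rintro f ⟨g, rfl⟩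
      simp only [ContinuousLinearMap.coe_coe]
      have hrw : ∀ n, ‖⟪(Bd g : H), fseq n⟫‖ = ‖⟪g, B (fseq n)⟫‖ := by
        intro n
        rw [hBd, ContinuousLinearMap.adjoint_inner_left]
      have hs := hB g
      have hs' : HasSum (fun n => ‖⟪(Bd g : H), fseq n⟫‖ ^ 2) (‖g‖ ^ 2) := by
        simpa only [hrw] using hs
      refine ⟨hs'.summable, ?_⟩
      rw [hs'.tsum_eq]
      have hn : ‖Bd g‖ ≤ (1 + ‖Bd‖) * ‖g‖ := by
        calc ‖Bd g‖ ≤ ‖Bd‖ * ‖g‖ := Bd.le_opNorm g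
          _ ≤ (1 + ‖Bd‖) * ‖g‖ := by nlinarith [norm_nonneg g]
      have h1 : (0:ℝ) < 1 + ‖Bd‖ := by positivity
      rw [inv_pow]
      rw [inv_mul_le_iff₀ (by positivity)]
      nlinarith [norm_nonneg (Bd g), norm_nonneg g]
  · exact stmt3' hH fseq
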